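/- Let f : ℝ̄ᵐ → ℝ̄ be monotone, order-concave, and strict (f(x) = −∞ whenever some component of x equals −∞), and let g : ℝ̄ⁿ → ℝ̄ᵐ be monotone and order-concave. Then f ∘ g : ℝ̄ⁿ → ℝ̄ is monotone and order-concave. -/

import Mathlib

/-- Coercion of a real vector to an extended-real vector. -/
noncomputable def coer {ι : Type*} (x : ι → ℝ) : ι → EReal := fun i => (x i : EReal)

/-- A selector `I : ι → Option Bool` fixes some coordinates to `−∞`
(`some false`) or `+∞` (`some true`) and leaves the others (`none`)
unchanged; `extApply I x` is the corresponding argument vector, so that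
`f (extApply I (coer x)) = f^{(I)}(x)`. -/
noncomputable def extApply {ι : Type*} (I : ι → Option Bool) (x : ι → EReal) : ι → EReal :=
  fun i => match I i with
  | none => x i
  | some true => ⊤
  | some false => ⊥

/-- The finite domain of `f^{(I)}`: real argument vectors on which `f^{(I)}`
takes a real value. -/
def fdomI {ι : Type*} (f : (ι → EReal) → EReal) (I : ι → Option Bool) :
    Set (ι → ℝ) :=
  {x | ∃ r : ℝ, f (extApply I (coer x)) = (r : EReal)}

/-- Order-convex set of real vectors. -/
def OrderConvexSet {ι : Type*} (S : Set (ι → ℝ)) : Prop :=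
  ∀ x ∈ S, ∀ y ∈ S, (x ≤ y ∨ y ≤ x) → ∀ t : ℝ, 0 ≤ t → t ≤ 1 →
    t • x + (1 - t) • y ∈ S

/-- `f : ℝ̄ⁿ → ℝ̄` is order-concave: for every selector `I`, the set
`fdomI f I` is order-convex, `f^{(I)}` is order-concave on it, and if it is
nonempty then `f^{(I)} < +∞` on all of ℝⁿ. -/
def OrderConcaveE {ι : Type*} (f : (ι → EReal) → EReal) : Prop :=
  ∀ I : ι → Option Bool,
    OrderConvexSet (fdomI f I) ∧
    (∀ x ∈ fdomI f I, ∀ y ∈ fdomI f I, x ≤ y → ∀ t : ℝ, 0 ≤ t → t ≤ 1 →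
      (t : EReal) * f (extApply I (coer x)) +
        ((1 - t : ℝ) : EReal) * f (extApply I (coer y)) ≤
        f (extApply I (coer (t • x + (1 - t) • y)))) ∧
    ((fdomI f I).Nonempty → ∀ x : ι → ℝ, f (extApply I (coer x)) < ⊤)

/-- `f : ℝ̄ⁿ → ℝ̄` is order-convex (dual definition). -/
def OrderConvexE {ι : Type*} (f : (ι → EReal) → EReal) : Prop :=
  ∀ I : ι → Option Bool,
    OrderConvexSet (fdomI f I) ∧
    (∀ x ∈ fdomI f I, ∀ y ∈ fdomI f I, x ≤ y → ∀ t : ℝ, 0 ≤ t → t ≤ 1 →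
      f (extApply I (coer (t • x + (1 - t) • y))) ≤
        (t : EReal) * f (extApply I (coer x)) +
          ((1 - t : ℝ) : EReal) * f (extApply I (coer y))) ∧
    ((fdomI f I).Nonempty → ∀ x : ι → ℝ, ⊥ < f (extApply I (coer x)))

/-- `f : ℝ̄ⁿ → ℝ̄` is concave: like `OrderConcaveE` but for all (not only
comparable) pairs, with convex finite domains. -/
def ConcaveE {ι : Type*} (f : (ι → EReal) → EReal) : Prop :=
  ∀ I : ι → Option Bool,
    Convex ℝ (fdomI f I) ∧
    (∀ x ∈ fdomI f I, ∀ y ∈ fdomI f I, ∀ t : ℝ, 0 ≤ t → t ≤ 1 →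
      (t : EReal) * f (extApply I (coer x)) +
        ((1 - t : ℝ) : EReal) * f (extApply I (coer y)) ≤
        f (extApply I (coer (t • x + (1 - t) • y)))) ∧
    ((fdomI f I).Nonempty → ∀ x : ι → ℝ, f (extApply I (coer x)) < ⊤)

/-- `f : ℝ̄ⁿ → ℝ̄` is convex (dual definition). -/
def ConvexE {ι : Type*} (f : (ι → EReal) → EReal) : Prop :=
  ∀ I : ι → Option Bool,
    Convex ℝ (fdomI f I) ∧
    (∀ x ∈ fdomI f I, ∀ y ∈ fdomI f I, ∀ t : ℝ, 0 ≤ t → t ≤ 1 →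
      f (extApply I (coer (t • x + (1 - t) • y))) ≤
        (t : EReal) * f (extApply I (coer x)) +
          ((1 - t : ℝ) : EReal) * f (extApply I (coer y))) ∧
    ((fdomI f I).Nonempty → ∀ x : ι → ℝ, ⊥ < f (extApply I (coer x)))

/-- A vector-valued function on extended reals is order-concave iff each
component is. -/
def OrderConcaveEVec {ι κ : Type*} (f : (ι → EReal) → κ → EReal) : Prop :=
  ∀ j : κ, OrderConcaveE (fun x => f x j)

/-- `f : ℝ̄ᵐ → ℝ̄` is strict: it takes the value `−∞` whenever some argument
component is `−∞`. -/
def StrictE {ι : Type*} (f : (ι → EReal) → EReal) : Prop :=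
  ∀ x : ι → EReal, (∃ k, x k = ⊥) → f x = ⊥

lemma extApply_mono {n : ℕ} (I : Fin n → Option Bool) {a b : Fin n → ℝ}
    (hab : a ≤ b) : extApply I (coer a) ≤ extApply I (coer b) := by
  intro i
  simp only [extApply, coer]
  cases I i with
  | none =>
    show ((a i : ℝ) : EReal) ≤ ((b i : ℝ) : EReal)
    exact_mod_cast hab i
  | some c => cases c <;> simp

/-- key concavity inequality for the composition -/
lemma key_aux {n m : ℕ}
    (f : (Fin m → EReal) → EReal) (g : (Fin n → EReal) → Fin m → EReal)
    (hfmono : Monotone f) (hfconc : OrderConcaveE f) (hfstrict : StrictE f)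
    (hgmono : Monotone g) (hgconc : OrderConcaveEVec g)
    (I : Fin n → Option Bool) {x y : Fin n → ℝ}
    (hx : x ∈ fdomI (fun x => f (g x)) I) (hy : y ∈ fdomI (fun x => f (g x)) I)
    (hxy : x ≤ y) (t : ℝ) (ht0 : 0 ≤ t) (ht1 : t ≤ 1) :
    (t : EReal) * f (g (extApply I (coer x))) +
      ((1 - t : ℝ) : EReal) * f (g (extApply I (coer y))) ≤
      f (g (extApply I (coer (t • x + (1 - t) • y)))) := by
  classical
  obtain ⟨r, hr⟩ := hx
  obtain ⟨s, hs⟩ := hy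
  simp only at hr hs
  set X := extApply I (coer x) with hXdef
  set Y := extApply I (coer y) with hYdef
  set z := t • x + (1 - t) • y with hzdef
  set Z := extApply I (coer z) with hZdef
  have hxz : x ≤ z := by
    intro i
    simp only [hzdef, Pi.add_apply, Pi.smul_apply, smul_eq_mul]
    nlinarith [hxy i]
  have hXY : g X ≤ g Y := hgmono (extApply_mono I hxy)
  have hXZ : g X ≤ g Z := hgmono (extApply_mono I hxz)
  have hXbot : ∀ j, g X j ≠ ⊥ := by
    intro j h
    rw [hfstrict (g X) ⟨j, h⟩] at hr
    exact (EReal.coe_ne_bot r) hr.symm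
  have hYbot : ∀ j, g Y j ≠ ⊥ := by
    intro j h
    rw [hfstrict (g Y) ⟨j, h⟩] at hs
    exact (EReal.coe_ne_bot s) hs.symm
  set J : Fin m → Option Bool := fun j => if g X j = ⊤ then some true else none
    with hJdef
  set u : Fin m → ℝ := fun j => (g X j).toReal with hudef
  set v : Fin m → ℝ := fun j => (g Y j).toReal with hvdef
  have hXj : ∀ j, g X j ≠ ⊤ → g X j = (u j : EReal) := fun j h =>
    (EReal.coe_toReal h (hXbot j)).symm
  have hYtop : ∀ j, g X j ≠ ⊤ → g Y j ≠ ⊤ := by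
    intro j h
    have hne : (fdomI (fun w => g w j) I).Nonempty := ⟨x, u j, hXj j h⟩
    exact ((hgconc j I).2.2 hne y).ne
  have hYj : ∀ j, g X j ≠ ⊤ → g Y j = (v j : EReal) := fun j h =>
    (EReal.coe_toReal (hYtop j h) (hYbot j)).symm
  have hgtop : ∀ j, g X j = ⊤ → g Y j = ⊤ := fun j h =>
    top_le_iff.mp (h ▸ hXY j)
  have hgtopZ : ∀ j, g X j = ⊤ → g Z j = ⊤ := fun j h =>
    top_le_iff.mp (h ▸ hXZ j)
  have hextu : extApply J (coer u) = g X := by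
    funext j
    by_cases h : g X j = ⊤
    · simp [extApply, coer, hJdef, h]
    · simp only [extApply, coer, hJdef, h, if_false]
      exact (hXj j h).symm
  have hextv : extApply J (coer v) = g Y := by
    funext j
    by_cases h : g X j = ⊤
    · simp [extApply, coer, hJdef, h, hgtop j h]
    · simp only [extApply, coer, hJdef, h, if_false]
      exact (hYj j h).symm
  have huv : u ≤ v := by
    intro j
    by_cases h : g X j = ⊤
    · simp [hudef, hvdef, h, hgtop j h]
    · have := hXY j
      rw [hXj j h, hYj j h] at this
      exact EReal.coe_le_coe_iff.mp this
  have hu_mem : u ∈ fdomI f J := ⟨r, by rw [hextu]; exact hr⟩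
  have hv_mem : v ∈ fdomI f J := ⟨s, by rw [hextv]; exact hs⟩
  have hcf := (hfconc J).2.1 u hu_mem v hv_mem huv t ht0 ht1
  rw [hextu, hextv] at hcf
  refine hcf.trans (hfmono ?_)
  intro j
  by_cases h : g X j = ⊤
  · have : extApply J (coer (t • u + (1 - t) • v)) j = ⊤ := by
      simp [extApply, hJdef, h]
    rw [this, hgtopZ j h]
  · have hmemx : x ∈ fdomI (fun w => g w j) I := ⟨u j, hXj j h⟩
    have hmemy : y ∈ fdomI (fun w => g w j) I := ⟨v j, hYj j h⟩
    have hcg := (hgconc j I).2.1 x hmemx y hmemy hxy t ht0 ht1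
    simp only at hcg
    rw [← hXdef, ← hYdef, ← hzdef, ← hZdef, hXj j h, hYj j h] at hcg
    have hval : extApply J (coer (t • u + (1 - t) • v)) j
        = ((t * u j + (1 - t) * v j : ℝ) : EReal) := by
      simp [extApply, coer, hJdef, h, smul_eq_mul]
    rw [hval]
    calc ((t * u j + (1 - t) * v j : ℝ) : EReal)
        = (t : EReal) * (u j : EReal) + ((1 - t : ℝ) : EReal) * (v j : EReal) := by
          push_cast; rfl
      _ ≤ g Z j := hcg

/-- finiteness from above of the composition on a nonempty finite domain -/
lemma top_aux {n m : ℕ}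
    (f : (Fin m → EReal) → EReal) (g : (Fin n → EReal) → Fin m → EReal)
    (hfmono : Monotone f) (hfconc : OrderConcaveE f) (hfstrict : StrictE f)
    (hgconc : OrderConcaveEVec g)
    (I : Fin n → Option Bool)
    (hne : (fdomI (fun x => f (g x)) I).Nonempty) :
    ∀ w : Fin n → ℝ, f (g (extApply I (coer w))) < ⊤ := by
  classical
  obtain ⟨x, r, hr⟩ := hne
  simp only at hr
  intro w
  set X := extApply I (coer x) with hXdef
  set W := extApply I (coer w) with hWdef
  have hXbot : ∀ j, g X j ≠ ⊥ := by
    intro j h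
    rw [hfstrict (g X) ⟨j, h⟩] at hr
    exact (EReal.coe_ne_bot r) hr.symm
  by_cases hWbot : ∃ j, g W j = ⊥
  · rw [hfstrict (g W) hWbot]
    exact bot_lt_top
  push_neg at hWbot
  set J : Fin m → Option Bool := fun j => if g X j = ⊤ then some true else none
    with hJdef
  set u : Fin m → ℝ := fun j => (g X j).toReal with hudef
  set v : Fin m → ℝ := fun j => (g W j).toReal with hvdef
  have hXj : ∀ j, g X j ≠ ⊤ → g X j = (u j : EReal) := fun j h =>
    (EReal.coe_toReal h (hXbot j)).symm
  have hextu : extApply J (coer u) = g X := by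
    funext j
    by_cases h : g X j = ⊤
    · simp [extApply, coer, hJdef, h]
    · simp only [extApply, coer, hJdef, h, if_false]
      exact (hXj j h).symm
  have hu_mem : u ∈ fdomI f J := ⟨r, by rw [hextu]; exact hr⟩
  have hWle : g W ≤ extApply J (coer v) := by
    intro j
    by_cases h : g X j = ⊤
    · simp [extApply, hJdef, h]
    · have hne' : (fdomI (fun w => g w j) I).Nonempty := ⟨x, u j, hXj j h⟩
      have hWtop := (hgconc j I).2.2 hne' w
      simp only at hWtop
      rw [← hWdef] at hWtop
      have heq : g W j = (v j : EReal) :=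
        (EReal.coe_toReal hWtop.ne (hWbot j)).symm
      simp only [extApply, coer, hJdef, h, if_false]
      exact le_of_eq heq
  exact lt_of_le_of_lt (hfmono hWle) ((hfconc J).2.2 ⟨u, hu_mem⟩ v)

/-- If `f : ℝ̄ᵐ → ℝ̄` is monotone, order-concave and strict,
and `g : ℝ̄ⁿ → ℝ̄ᵐ` is monotone and order-concave, then `f ∘ g` is monotone
and order-concave. -/
theorem comp_morcave_strict {n m : ℕ}
    (f : (Fin m → EReal) → EReal) (g : (Fin n → EReal) → Fin m → EReal)
    (hfmono : Monotone f) (hfconc : OrderConcaveE f) (hfstrict : StrictE f)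
    (hgmono : Monotone g) (hgconc : OrderConcaveEVec g) :
    Monotone (fun x => f (g x)) ∧ OrderConcaveE (fun x => f (g x)) := by
  refine ⟨fun a b hab => hfmono (hgmono hab), ?_⟩
  intro I
  refine ⟨?_,
    fun x hx y hy hxy t ht0 ht1 =>
      key_aux f g hfmono hfconc hfstrict hgmono hgconc I hx hy hxy t ht0 ht1,
    fun hne w => top_aux f g hfmono hfconc hfstrict hgconc I hne w⟩
  intro x hx y hy hcomp t ht0 ht1
  have hlt : ∀ w : Fin n → ℝ, f (g (extApply I (coer w))) < ⊤ :=
    top_aux f g hfmono hfconc hfstrict hgconc I ⟨x, hx⟩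
  have main : (⊥ : EReal) < f (g (extApply I (coer (t • x + (1 - t) • y)))) := by
    rcases hcomp with h | h
    · have hk := key_aux f g hfmono hfconc hfstrict hgmono hgconc I hx hy h t ht0 ht1
      obtain ⟨r, hr⟩ := hx
      obtain ⟨s, hs⟩ := hy
      simp only at hr hs
      rw [hr, hs] at hk
      refine lt_of_lt_of_le ?_ hk
      rw [← EReal.coe_mul, ← EReal.coe_mul, ← EReal.coe_add]
      exact EReal.bot_lt_coe _
    · have heq : t • x + (1 - t) • y = (1 - t) • y + (1 - (1 - t)) • x := by
        funext i
        simp only [Pi.add_apply, Pi.smul_apply, smul_eq_mul]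
        ring
      rw [heq]
      have hk := key_aux f g hfmono hfconc hfstrict hgmono hgconc I hy hx h
        (1 - t) (by linarith) (by linarith)
      obtain ⟨r, hr⟩ := hx
      obtain ⟨s, hs⟩ := hy
      simp only at hr hs
      rw [hr, hs] at hk
      refine lt_of_lt_of_le ?_ hk
      rw [← EReal.coe_mul, ← EReal.coe_mul, ← EReal.coe_add]
      exact EReal.bot_lt_coe _
  have htop := hlt (t • x + (1 - t) • y)
  exact ⟨(f (g (extApply I (coer (t • x + (1 - t) • y))))).toReal,
    (EReal.coe_toReal htop.ne (ne_of_gt main)).symm⟩
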